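/- Let G be a connected compact Lie group, σ an automorphism of G, T a torus contained in the fixed-point group G^σ, and t ∈ T. Suppose Ad(t⁻¹) ∘ dσ is a semisimple endomorphism of the Lie algebra 𝔤 (which holds when G is semisimple). Then im(Ad(t⁻¹) − dσ) ∩ 𝔱 = 0, where 𝔱 is the Lie algebra of T. Consequently, the twisted orbit through t meets T in a discrete set near t. -/

import Mathlib

/-- Linear-algebra core of the statement: on the Lie algebra `𝔤` of a connected compact
Lie group, with `Adt = Ad(t⁻¹)` and `dσ` commuting endomorphisms, `𝔱 ⊆ ker(Adt − dσ)`
the Lie algebra of a torus `T ⊆ G^σ` containing `t`, if `Adt − dσ` is semisimple then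
`im(Adt − dσ) ∩ 𝔱 = 0` (so the twisted orbit through `t` meets `T` discretely near `t`). -/
theorem stmt19 {𝔤 : Type*} [AddCommGroup 𝔤] [Module ℝ 𝔤] [FiniteDimensional ℝ 𝔤]
    (Adt dσ : Module.End ℝ 𝔤) (hcomm : Commute Adt dσ)
    (𝔱 : Submodule ℝ 𝔤) (h𝔱 : 𝔱 ≤ LinearMap.ker (Adt - dσ))
    (hss : (Adt - dσ).IsSemisimple) :
    LinearMap.range (Adt - dσ) ⊓ 𝔱 = ⊥ := by
  set f := Adt - dσ with hf
  -- it suffices to show range f ⊓ ker f = ⊥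
  have key : LinearMap.range f ⊓ LinearMap.ker f = ⊥ := by
    -- ker f is an invariant submodule of f
    have hker : LinearMap.ker f ∈ f.invtSubmodule := by
      rw [Module.End.mem_invtSubmodule]
      intro x hx
      simp only [Submodule.mem_comap, LinearMap.mem_ker] at hx ⊢
      simp [hx]
    obtain ⟨q, hq, hcompl⟩ := Module.End.isSemisimple_iff.mp hss _ hker
    rw [Submodule.eq_bot_iff]
    rintro x ⟨⟨y, rfl⟩, hxker⟩
    -- decompose y = a + b with a ∈ ker f, b ∈ q
    obtain ⟨a, b, ha, hb, rfl⟩ := Submodule.codisjoint_iff_exists_add_eq.mp hcompl.codisjoint y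
    have hfa : f a = 0 := ha
    have hfy : f (a + b) = f b := by simp [map_add, hfa]
    have hfbq : f b ∈ q := (Module.End.mem_invtSubmodule f).mp hq hb
    have : f (a + b) ∈ LinearMap.ker f ⊓ q := ⟨hxker, hfy ▸ hfbq⟩
    rw [hcompl.inf_eq_bot] at this
    simpa using this
  rw [eq_bot_iff]
  calc LinearMap.range f ⊓ 𝔱 ≤ LinearMap.range f ⊓ LinearMap.ker f :=
        inf_le_inf_left _ h𝔱
    _ = ⊥ := key
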